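/- arXiv:1803.00733 — 5 statements merged into one kernel-verified Lean document; each statement's English description precedes it below -/
import Mathlib

section
/- Assume that ω ↦ log‖A₁(ω)‖ is integrable with E[log‖A₁‖] < 0, and that E[log⁺‖B₁‖] < ∞. Then the random series Σ_{k=0}^{∞} (A₁ A₂ ⋯ A_k) B_{k+1} converges absolutely in ℝ^q almost surely, i.e. almost surely Σ_{k=0}^{∞} ‖(A₁ ⋯ A_k) B_{k+1}‖ < ∞. -/
open MeasureTheory ProbabilityTheory Filter
open scoped NNReal Topology

/-- The ordered composition `A s ω ∘ A (s+1) ω ∘ ⋯ ∘ A (s+k-1) ω` of random continuous linear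
maps on Euclidean space (the identity when `k = 0`). -/
noncomputable def fwdProd {Ω : Type*} {q : ℕ}
    (A : ℕ → Ω → (EuclideanSpace ℝ (Fin q) →L[ℝ] EuclideanSpace ℝ (Fin q)))
    (s k : ℕ) (ω : Ω) : EuclideanSpace ℝ (Fin q) →L[ℝ] EuclideanSpace ℝ (Fin q) :=
  ((List.range k).map (fun i => A (s + i) ω)).prod

lemma fwdProd_succ {Ω : Type*} {q : ℕ}
    (A : ℕ → Ω → (EuclideanSpace ℝ (Fin q) →L[ℝ] EuclideanSpace ℝ (Fin q)))
    (s k : ℕ) (ω : Ω) :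
    fwdProd A s (k + 1) ω = fwdProd A s k ω * A (s + k) ω := by
  simp [fwdProd, List.range_succ]

lemma fwdProd_norm_le {Ω : Type*} {q : ℕ}
    (A : ℕ → Ω → (EuclideanSpace ℝ (Fin q) →L[ℝ] EuclideanSpace ℝ (Fin q)))
    (s k : ℕ) (ω : Ω) :
    ‖fwdProd A s k ω‖ ≤ ∏ i ∈ Finset.range k, ‖A (s + i) ω‖ := by
  induction k with
  | zero =>
    simp only [fwdProd, List.range_zero, List.map_nil, List.prod_nil, Finset.range_zero,
      Finset.prod_empty]
    exact ContinuousLinearMap.norm_id_le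
  | succ k ih =>
    rw [fwdProd_succ, Finset.prod_range_succ]
    exact le_trans (norm_mul_le _ _)
      (mul_le_mul_of_nonneg_right ih (norm_nonneg _) |>.trans
        (le_of_eq rfl))

/-- Almost sure absolute convergence of the backward series
`Σ_{k≥0} (A₁ ⋯ A_k) B_{k+1}` for an i.i.d. sequence `((A_k, B_k))_{k≥1}` of random matrices
and vectors under the negative-drift condition `E[log ‖A₁‖] < 0` and `E[log⁺ ‖B₁‖] < ∞`. -/
theorem backward_series_abs_convergent
    {Ω : Type*} [MeasureSpace Ω] [IsProbabilityMeasure (ℙ : Measure Ω)]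
    {q : ℕ} (hq : 1 ≤ q)
    [MeasurableSpace (EuclideanSpace ℝ (Fin q) →L[ℝ] EuclideanSpace ℝ (Fin q))]
    [BorelSpace (EuclideanSpace ℝ (Fin q) →L[ℝ] EuclideanSpace ℝ (Fin q))]
    (A : ℕ → Ω → (EuclideanSpace ℝ (Fin q) →L[ℝ] EuclideanSpace ℝ (Fin q)))
    (B : ℕ → Ω → EuclideanSpace ℝ (Fin q))
    (hAmeas : ∀ k : ℕ, Measurable (A (k + 1)))
    (hBmeas : ∀ k : ℕ, Measurable (B (k + 1)))
    (hiid : iIndepFun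
      (fun (k : ℕ) ω => (A (k + 1) ω, B (k + 1) ω)) ℙ)
    (hident : ∀ k : ℕ, IdentDistrib (fun ω => (A (k + 1) ω, B (k + 1) ω))
      (fun ω => (A 1 ω, B 1 ω)) ℙ ℙ)
    (hlogA_int : Integrable (fun ω => Real.log ‖A 1 ω‖) ℙ)
    (hlogA_neg : ∫ ω, Real.log ‖A 1 ω‖ ∂ℙ < 0)
    (hlogB_int : Integrable (fun ω => Real.log (max 1 ‖B 1 ω‖)) ℙ) :
    ∀ᵐ ω ∂ℙ, Summable (fun k : ℕ => ‖(fwdProd A 1 k ω) (B (k + 1) ω)‖) := by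
  classical
  set X : ℕ → Ω → ℝ := fun k ω => Real.log ‖A (k + 1) ω‖ with hX
  set Y : ℕ → Ω → ℝ := fun k ω => Real.log (max 1 ‖B (k + 1) ω‖) with hY
  have hg1 : Measurable (fun p : (EuclideanSpace ℝ (Fin q) →L[ℝ] EuclideanSpace ℝ (Fin q)) ×
      EuclideanSpace ℝ (Fin q) => Real.log ‖p.1‖) :=
    Real.measurable_log.comp (measurable_fst.norm)
  have hg2 : Measurable (fun p : (EuclideanSpace ℝ (Fin q) →L[ℝ] EuclideanSpace ℝ (Fin q)) ×
      EuclideanSpace ℝ (Fin q) => Real.log (max 1 ‖p.2‖)) :=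
    Real.measurable_log.comp (measurable_const.max measurable_snd.norm)
  have hXindep : Pairwise (Function.onFun (IndepFun · · ℙ) X) := by
    intro i j hij
    exact (hiid.comp (fun _ => _) (fun _ => hg1)).indepFun hij
  have hYindep : Pairwise (Function.onFun (IndepFun · · ℙ) Y) := by
    intro i j hij
    exact (hiid.comp (fun _ => _) (fun _ => hg2)).indepFun hij
  have hXident : ∀ i, IdentDistrib (X i) (X 0) ℙ ℙ := fun i => (hident i).comp hg1
  have hYident : ∀ i, IdentDistrib (Y i) (Y 0) ℙ ℙ := fun i => (hident i).comp hg2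
  have hX0 : X 0 = fun ω => Real.log ‖A 1 ω‖ := rfl
  have hY0 : Y 0 = fun ω => Real.log (max 1 ‖B 1 ω‖) := rfl
  have hSLA := strong_law_ae_real X (hX0 ▸ hlogA_int) hXindep hXident
  have hSLB := strong_law_ae_real Y (hY0 ▸ hlogB_int) hYindep hYident
  filter_upwards [hSLA, hSLB] with ω hS hT
  set μ0 : ℝ := ℙ[X 0] with hμ0
  have hμ0neg : μ0 < 0 := hlogA_neg
  set ν : ℝ := ℙ[Y 0] with hν
  set S : ℕ → ℝ := fun n => ∑ i ∈ Finset.range n, X i ω with hSdef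
  set T : ℕ → ℝ := fun n => ∑ i ∈ Finset.range n, Y i ω with hTdef
  -- T (k+1) / k → ν
  have h1 : Tendsto (fun k : ℕ => T (k + 1) / (k + 1 : ℕ)) atTop (𝓝 ν) :=
    hT.comp (tendsto_add_atTop_nat 1)
  have h2 : Tendsto (fun k : ℕ => ((k : ℝ) + 1) / k) atTop (𝓝 1) := by
    have : Tendsto (fun k : ℕ => 1 + 1 / (k : ℝ)) atTop (𝓝 (1 + 0)) :=
      tendsto_const_nhds.add tendsto_one_div_atTop_nhds_zero_nat
    rw [add_zero] at this
    refine this.congr' ?_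
    filter_upwards [eventually_ge_atTop 1] with k hk
    have hk0 : (k : ℝ) ≠ 0 := Nat.cast_ne_zero.mpr (by omega)
    field_simp
  have h3 : Tendsto (fun k : ℕ => T (k + 1) / k) atTop (𝓝 ν) := by
    have := h1.mul h2
    rw [mul_one] at this
    refine this.congr ?_
    intro k
    rcases Nat.eq_zero_or_pos k with rfl | hk
    · simp
    · have hk0 : (k : ℝ) ≠ 0 := Nat.cast_ne_zero.mpr hk.ne'
      have hk1 : (k : ℝ) + 1 ≠ 0 := by positivity
      push_cast
      field_simp
  have h4 : Tendsto (fun k : ℕ => Y k ω / k) atTop (𝓝 0) := by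
    have hdiff : (fun k : ℕ => Y k ω / k) = fun k : ℕ => T (k + 1) / k - T k / k := by
      funext k
      rw [← sub_div]
      congr 1
      simp [hTdef, Finset.sum_range_succ]
    rw [hdiff]
    simpa using h3.sub hT
  have h5 : Tendsto (fun k : ℕ => (S k + Y k ω) / k) atTop (𝓝 μ0) := by
    have := hS.add h4
    rw [add_zero] at this
    refine this.congr fun k => ?_
    rw [add_div]
  have hhalf : μ0 < μ0 / 2 := by linarith
  have hev : ∀ᶠ k : ℕ in atTop, (S k + Y k ω) / k < μ0 / 2 :=
    h5.eventually_lt_const hhalf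
  rw [eventually_atTop] at hev
  obtain ⟨N, hN⟩ := hev
  set r : ℝ := Real.exp (μ0 / 2) with hr
  have hr0 : 0 ≤ r := Real.exp_nonneg _
  have hr1 : r < 1 := Real.exp_lt_one_iff.mpr (by linarith)
  set M : ℕ := max N 1 with hM
  -- the key termwise bound
  have hbound : ∀ k ≥ M, ‖(fwdProd A 1 k ω) (B (k + 1) ω)‖ ≤ r ^ k := by
    intro k hk
    have hk1 : 1 ≤ k := le_trans (le_max_right _ _) hk
    have hkN : N ≤ k := le_trans (le_max_left _ _) hk
    have hkpos : (0 : ℝ) < k := by exact_mod_cast hk1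
    have hlt : S k + Y k ω < (μ0 / 2) * k := by
      have := hN k hkN
      rw [div_lt_iff₀ hkpos] at this
      linarith
    have step1 : ‖(fwdProd A 1 k ω) (B (k + 1) ω)‖ ≤
        (∏ i ∈ Finset.range k, ‖A (1 + i) ω‖) * (max 1 ‖B (k + 1) ω‖) := by
      refine le_trans ((fwdProd A 1 k ω).le_opNorm _) ?_
      exact mul_le_mul (fwdProd_norm_le A 1 k ω) (le_max_right _ _) (norm_nonneg _)
        (Finset.prod_nonneg fun i _ => norm_nonneg _)
    have step2 : (∏ i ∈ Finset.range k, ‖A (1 + i) ω‖) ≤ Real.exp (S k) := by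
      rw [hSdef]
      simp only [Real.exp_sum]
      refine Finset.prod_le_prod (fun i _ => norm_nonneg _) fun i _ => ?_
      rw [add_comm 1 i]
      exact Real.le_exp_log _
    have step3 : (max 1 ‖B (k + 1) ω‖) = Real.exp (Y k ω) :=
      (Real.exp_log (lt_of_lt_of_le zero_lt_one (le_max_left _ _))).symm
    calc ‖(fwdProd A 1 k ω) (B (k + 1) ω)‖
        ≤ (∏ i ∈ Finset.range k, ‖A (1 + i) ω‖) * (max 1 ‖B (k + 1) ω‖) := step1
      _ ≤ Real.exp (S k) * Real.exp (Y k ω) := by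
          rw [step3]
          exact mul_le_mul_of_nonneg_right step2 (Real.exp_nonneg _)
      _ = Real.exp (S k + Y k ω) := (Real.exp_add _ _).symm
      _ ≤ Real.exp ((μ0 / 2) * k) := Real.exp_le_exp.mpr hlt.le
      _ = r ^ k := by rw [hr, ← Real.exp_nat_mul]; ring_nf
  -- conclude summability
  rw [← summable_nat_add_iff M]
  have hgeom : Summable (fun n : ℕ => r ^ (n + M)) := by
    simpa [pow_add] using (summable_geometric_of_lt_one hr0 hr1).mul_right (r ^ M)
  refine Summable.of_nonneg_of_le (fun n => norm_nonneg _) (fun n => ?_) hgeom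
  exact hbound (n + M) (Nat.le_add_left _ _)
end

section
/- Assume that ω ↦ log‖A₁(ω)‖ is integrable with E[log‖A₁‖] < 0, and that E[log⁺‖B₁‖] < ∞. Then there is at most one Borel probability measure μ on ℝ^q with the following property: whenever U is a random vector with distribution μ that is independent of the pair (A₁, B₁), the random vector A₁ U + B₁ also has distribution μ. -/
universe u

open MeasureTheory ProbabilityTheory Filter
open scoped NNReal Topology

section Aux

abbrev EVec (q : ℕ) := EuclideanSpace ℝ (Fin q)
abbrev EMat (q : ℕ) := EVec q →L[ℝ] EVec q

/-- Iterated affine recursion: `iterAff q n (x, s)` is the result of applying the affine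
maps `s 0, s 1, ..., s (n-1)` successively to the starting point `x`. -/
noncomputable def iterAff (q : ℕ) : (n : ℕ) → EVec q × (Fin n → EMat q × EVec q) → EVec q
  | 0 => fun p => p.1
  | n + 1 => fun p =>
      (p.2 (Fin.last n)).1 (iterAff q n (p.1, fun k => p.2 k.castSucc)) + (p.2 (Fin.last n)).2

lemma iterAff_measurable (q : ℕ) [MeasurableSpace (EMat q)] [BorelSpace (EMat q)] :
    ∀ n : ℕ, Measurable (iterAff q n)
  | 0 => measurable_fst
  | n + 1 => by
    have happly : Measurable fun r : EMat q × EVec q => r.1 r.2 :=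
      isBoundedBilinearMap_apply.continuous.measurable
    have h1 : Measurable fun p : EVec q × (Fin (n + 1) → EMat q × EVec q) =>
        p.2 (Fin.last n) := (measurable_pi_apply _).comp measurable_snd
    have h2 : Measurable fun p : EVec q × (Fin (n + 1) → EMat q × EVec q) =>
        iterAff q n (p.1, fun k => p.2 k.castSucc) :=
      (iterAff_measurable q n).comp
        (measurable_fst.prodMk (measurable_pi_lambda _ fun k =>
          (measurable_pi_apply _).comp measurable_snd))
    exact (happly.comp (h1.fst.prodMk h2)).add h1.snd

/-- On a product probability space `P.prod m`, the pair consisting of the second coordinate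
and an `X` read off the first coordinate is independent of a `Z` read off the first coordinate,
provided `X` and `Z` are independent under `P`. -/
lemma indep_prod_aux {Ω α γ δ : Type*} [MeasurableSpace Ω] [MeasurableSpace α]
    [MeasurableSpace γ] [MeasurableSpace δ]
    {P : Measure Ω} [IsProbabilityMeasure P] {m : Measure δ} [IsProbabilityMeasure m]
    {X : Ω → α} {Z : Ω → γ} (hX : Measurable X) (hZ : Measurable Z)
    (h : IndepFun X Z P) :
    IndepFun (fun p : Ω × δ => (p.2, X p.1)) (fun p : Ω × δ => Z p.1) (P.prod m) := by
  have hXZ : Measurable fun ω => (X ω, Z ω) := hX.prodMk hZ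
  have hmap : P.map (fun ω => (X ω, Z ω)) = (P.map X).prod (P.map Z) :=
    (indepFun_iff_map_prod_eq_prod_map_map hX.aemeasurable hZ.aemeasurable).1 h
  have hf1 : Measurable fun p : Ω × δ => (p.2, X p.1) :=
    measurable_snd.prodMk (hX.comp measurable_fst)
  have hg1 : Measurable fun p : Ω × δ => Z p.1 := hZ.comp measurable_fst
  rw [indepFun_iff_map_prod_eq_prod_map_map (f := fun p : Ω × δ => (p.2, X p.1))
    (g := fun p : Ω × δ => Z p.1) hf1.aemeasurable hg1.aemeasurable]
  have hL : (P.prod m).map (fun p : Ω × δ => ((p.2, X p.1), Z p.1))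
      = (m.prod (P.map X)).prod (P.map Z) := by
    have e1 : (fun p : Ω × δ => ((p.2, X p.1), Z p.1))
        = (MeasurableEquiv.prodAssoc.symm : δ × α × γ ≃ᵐ (δ × α) × γ)
          ∘ (Prod.map id fun ω => (X ω, Z ω)) ∘ Prod.swap := rfl
    rw [e1, ← Measure.map_map (MeasurableEquiv.prodAssoc.symm.measurable)
        ((measurable_id.prodMap hXZ).comp measurable_swap),
      ← Measure.map_map (measurable_id.prodMap hXZ) measurable_swap,
      Measure.prod_swap, ← Measure.map_prod_map _ _ measurable_id hXZ,
      Measure.map_id, hmap]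
    exact ((measurePreserving_prodAssoc m (P.map X) (P.map Z)).symm
      MeasurableEquiv.prodAssoc).map_eq
  have hR1 : (P.prod m).map (fun p : Ω × δ => (p.2, X p.1)) = m.prod (P.map X) := by
    have e2 : (fun p : Ω × δ => (p.2, X p.1)) = (Prod.map id X) ∘ Prod.swap := rfl
    rw [e2, ← Measure.map_map (measurable_id.prodMap hX) measurable_swap,
      Measure.prod_swap, ← Measure.map_prod_map _ _ measurable_id hX, Measure.map_id]
  have hR2 : (P.prod m).map (fun p : Ω × δ => Z p.1) = P.map Z := by
    have e3 : (fun p : Ω × δ => Z p.1) = Z ∘ Prod.fst := rfl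
    rw [e3, ← Measure.map_map hZ measurable_fst, Measure.map_fst_prod, measure_univ, one_smul]
  rw [hL, hR1, hR2]

/-- If two sequences of random variables have constant laws `ρ₁`, `ρ₂` and their distance
tends to zero almost surely, then `ρ₁ F ≤ ρ₂ F` for every closed `F`. -/
lemma closed_le_aux {Ω' : Type*} [MeasurableSpace Ω'] {P : Measure Ω'} [IsProbabilityMeasure P]
    {α : Type*} [MeasurableSpace α] [PseudoMetricSpace α] [SecondCountableTopology α] [OpensMeasurableSpace α]
    {ρ₁ ρ₂ : Measure α} [IsFiniteMeasure ρ₂]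
    {X Y : ℕ → Ω' → α} (hX : ∀ n, Measurable (X n)) (hY : ∀ n, Measurable (Y n))
    (hlX : ∀ n, Measure.map (X n) P = ρ₁) (hlY : ∀ n, Measure.map (Y n) P = ρ₂)
    (hd : ∀ᵐ p ∂P, Tendsto (fun n => dist (X n p) (Y n p)) atTop (𝓝 0))
    {F : Set α} (hF : IsClosed F) : ρ₁ F ≤ ρ₂ F := by
  have hTIM : TendstoInMeasure P (fun n p => dist (X n p) (Y n p)) atTop (fun _ => (0 : ℝ)) :=
    tendstoInMeasure_of_tendsto_ae
      (fun n => ((hX n).dist (hY n)).aestronglyMeasurable) hd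
  have key : ∀ δ : ℝ, 0 < δ → ρ₁ F ≤ ρ₂ (Metric.thickening δ F) := by
    intro δ hδ
    have hn : ∀ n, ρ₁ F ≤ ρ₂ (Metric.thickening δ F)
        + P {p | δ ≤ dist (dist (X n p) (Y n p)) 0} := by
      intro n
      have hsub : (X n) ⁻¹' F ⊆ (Y n) ⁻¹' (Metric.thickening δ F)
          ∪ {p | δ ≤ dist (dist (X n p) (Y n p)) 0} := by
        intro p hp
        by_cases hcase : δ ≤ dist (dist (X n p) (Y n p)) 0
        · exact Or.inr hcase
        · refine Or.inl ?_
          rw [Real.dist_0_eq_abs, abs_of_nonneg dist_nonneg, not_le] at hcase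
          exact Metric.mem_thickening_iff.2 ⟨X n p, hp, by rwa [dist_comm]⟩
      calc ρ₁ F = P ((X n) ⁻¹' F) := by
            rw [← hlX n, Measure.map_apply (hX n) hF.measurableSet]
        _ ≤ P ((Y n) ⁻¹' (Metric.thickening δ F))
            + P {p | δ ≤ dist (dist (X n p) (Y n p)) 0} :=
            (measure_mono hsub).trans (measure_union_le _ _)
        _ = ρ₂ (Metric.thickening δ F) + P {p | δ ≤ dist (dist (X n p) (Y n p)) 0} := by
            rw [← hlY n, Measure.map_apply (hY n) Metric.isOpen_thickening.measurableSet]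
    have hlim : Tendsto (fun n => ρ₂ (Metric.thickening δ F)
        + P {p | δ ≤ dist (dist (X n p) (Y n p)) 0}) atTop
        (𝓝 (ρ₂ (Metric.thickening δ F))) := by
      have := (tendsto_const_nhds (x := ρ₂ (Metric.thickening δ F))
        (f := atTop (α := ℕ))).add (tendstoInMeasure_iff_dist.1 hTIM δ hδ)
      simpa using this
    exact ge_of_tendsto hlim (Eventually.of_forall hn)
  have hthick : Tendsto (fun δ : ℝ => ρ₂ (Metric.thickening δ F)) (𝓝[>] 0) (𝓝 (ρ₂ F)) :=
    tendsto_measure_thickening_of_isClosed ⟨1, one_pos, measure_ne_top _ _⟩ hF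
  exact ge_of_tendsto hthick (eventually_nhdsWithin_of_forall fun δ hδ => key δ hδ)

end Aux

/-- Uniqueness of the solution of the distributional fixed-point equation `U ≟ A₁ U + B₁`:
under `E[log ‖A₁‖] < 0` and `E[log⁺ ‖B₁‖] < ∞` there is at most one Borel probability measure
`μ` such that whenever `U` is a random vector with distribution `μ`, independent of a pair
`(A', B')` distributed as `(A₁, B₁)`, the random vector `A' U + B'` again has distribution
`μ`. -/
theorem fixed_point_distribution_unique
    {Ω : Type u} [MeasureSpace Ω] [IsProbabilityMeasure (ℙ : Measure Ω)]
    {q : ℕ} (hq : 1 ≤ q)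
    [MeasurableSpace (EuclideanSpace ℝ (Fin q) →L[ℝ] EuclideanSpace ℝ (Fin q))]
    [BorelSpace (EuclideanSpace ℝ (Fin q) →L[ℝ] EuclideanSpace ℝ (Fin q))]
    (A : ℕ → Ω → (EuclideanSpace ℝ (Fin q) →L[ℝ] EuclideanSpace ℝ (Fin q)))
    (B : ℕ → Ω → EuclideanSpace ℝ (Fin q))
    (hAmeas : ∀ k : ℕ, Measurable (A (k + 1)))
    (hBmeas : ∀ k : ℕ, Measurable (B (k + 1)))
    (hiid : iIndepFun
      (fun (k : ℕ) ω => (A (k + 1) ω, B (k + 1) ω)) ℙ)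
    (hident : ∀ k : ℕ, IdentDistrib (fun ω => (A (k + 1) ω, B (k + 1) ω))
      (fun ω => (A 1 ω, B 1 ω)) ℙ ℙ)
    (hlogA_int : Integrable (fun ω => Real.log ‖A 1 ω‖) ℙ)
    (hlogA_neg : ∫ ω, Real.log ‖A 1 ω‖ ∂ℙ < 0)
    (hlogB_int : Integrable (fun ω => Real.log (max 1 ‖B 1 ω‖)) ℙ)
    (μ ν : Measure (EuclideanSpace ℝ (Fin q)))
    [IsProbabilityMeasure μ] [IsProbabilityMeasure ν]
    (hμ : ∀ (Ω' : Type u) [MeasurableSpace Ω'] (P' : Measure Ω'), IsProbabilityMeasure P' →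
      ∀ (A' : Ω' → (EuclideanSpace ℝ (Fin q) →L[ℝ] EuclideanSpace ℝ (Fin q)))
        (B' : Ω' → EuclideanSpace ℝ (Fin q)) (U : Ω' → EuclideanSpace ℝ (Fin q)),
        Measurable A' → Measurable B' → Measurable U →
        IdentDistrib (fun ω' => (A' ω', B' ω')) (fun ω => (A 1 ω, B 1 ω)) P' ℙ →
        IndepFun U (fun ω' => (A' ω', B' ω')) P' →
        Measure.map U P' = μ →
        Measure.map (fun ω' => A' ω' (U ω') + B' ω') P' = μ)
    (hν : ∀ (Ω' : Type u) [MeasurableSpace Ω'] (P' : Measure Ω'), IsProbabilityMeasure P' →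
      ∀ (A' : Ω' → (EuclideanSpace ℝ (Fin q) →L[ℝ] EuclideanSpace ℝ (Fin q)))
        (B' : Ω' → EuclideanSpace ℝ (Fin q)) (U : Ω' → EuclideanSpace ℝ (Fin q)),
        Measurable A' → Measurable B' → Measurable U →
        IdentDistrib (fun ω' => (A' ω', B' ω')) (fun ω => (A 1 ω, B 1 ω)) P' ℙ →
        IndepFun U (fun ω' => (A' ω', B' ω')) P' →
        Measure.map U P' = ν →
        Measure.map (fun ω' => A' ω' (U ω') + B' ω') P' = ν) :
    μ = ν := by
  classical
  -- The product probability space carrying `ℙ` together with independent draws from `μ` and `ν`.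
  set m : Measure (EVec q × EVec q) := μ.prod ν with hm
  set P' : Measure (Ω × (EVec q × EVec q)) := (ℙ : Measure Ω).prod m with hP'
  have : IsProbabilityMeasure m := by infer_instance
  have hP'prob : IsProbabilityMeasure P' := by infer_instance
  -- The iterated sequences.
  set Uf : ℕ → Ω × (EVec q × EVec q) → EVec q := fun n p =>
    iterAff q n (p.2.1, fun k : Fin n => (A (k + 1) p.1, B (k + 1) p.1)) with hUf
  set Vf : ℕ → Ω × (EVec q × EVec q) → EVec q := fun n p =>
    iterAff q n (p.2.2, fun k : Fin n => (A (k + 1) p.1, B (k + 1) p.1)) with hVf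
  have hrecU : ∀ n, Uf (n + 1) = fun p => A (n + 1) p.1 (Uf n p) + B (n + 1) p.1 := by
    intro n; funext p; simp only [hUf, iterAff, Fin.val_last, Fin.coe_castSucc]
  have hrecV : ∀ n, Vf (n + 1) = fun p => A (n + 1) p.1 (Vf n p) + B (n + 1) p.1 := by
    intro n; funext p; simp only [hVf, iterAff, Fin.val_last, Fin.coe_castSucc]
  have hpairmeas : ∀ n : ℕ, Measurable fun ω => (A (n + 1) ω, B (n + 1) ω) :=
    fun n => (hAmeas n).prodMk (hBmeas n)
  have hSmeas : ∀ n : ℕ, Measurable fun (ω : Ω) (k : Fin n) => (A (k + 1) ω, B (k + 1) ω) :=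
    fun n => measurable_pi_lambda _ fun k => hpairmeas k
  have hUmeas : ∀ n, Measurable (Uf n) := by
    intro n
    exact (iterAff_measurable q n).comp
      ((measurable_fst.comp measurable_snd).prodMk ((hSmeas n).comp measurable_fst))
  have hVmeas : ∀ n, Measurable (Vf n) := by
    intro n
    exact (iterAff_measurable q n).comp
      ((measurable_snd.comp measurable_snd).prodMk ((hSmeas n).comp measurable_fst))
  -- identically distributed innovation pairs on the product space
  have hident' : ∀ n : ℕ, IdentDistrib (fun p : Ω × (EVec q × EVec q) => (A (n + 1) p.1, B (n + 1) p.1))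
      (fun ω => (A 1 ω, B 1 ω)) P' ℙ := by
    intro n
    refine ⟨((hpairmeas n).comp measurable_fst).aemeasurable, (hpairmeas 0).aemeasurable, ?_⟩
    have e : (fun p : Ω × (EVec q × EVec q) => (A (n + 1) p.1, B (n + 1) p.1))
        = (fun ω => (A (n + 1) ω, B (n + 1) ω)) ∘ Prod.fst := rfl
    rw [e, ← Measure.map_map (hpairmeas n) measurable_fst, Measure.map_fst_prod,
      measure_univ, one_smul]
    exact (hident n).map_eq
  -- independence of `Uf n` (and `Vf n`) from the `(n+1)`-st innovation
  have hindepU : ∀ n : ℕ, IndepFun (Uf n)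
      (fun p : Ω × (EVec q × EVec q) => (A (n + 1) p.1, B (n + 1) p.1)) P' := by
    intro n
    have hST : IndepFun (fun (ω : Ω) (k : Fin n) => (A (k + 1) ω, B (k + 1) ω))
        (fun ω => (A (n + 1) ω, B (n + 1) ω)) ℙ := by
      have hdisj : Disjoint (Finset.range n) ({n} : Finset ℕ) := by
        simp [Finset.disjoint_singleton_right]
      have h := (hiid.indepFun_finset (Finset.range n) {n} hdisj
        (fun k => hpairmeas k))
      have hc := h.comp
        (φ := fun (v : ↥(Finset.range n) → EMat q × EVec q) (k : Fin n) =>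
          v ⟨(k : ℕ), Finset.mem_range.2 k.isLt⟩)
        (ψ := fun (v : ↥({n} : Finset ℕ) → EMat q × EVec q) => v ⟨n, Finset.mem_singleton_self n⟩)
        (measurable_pi_lambda _ fun k => measurable_pi_apply _)
        (measurable_pi_apply (X := fun _ : ↥({n} : Finset ℕ) => EMat q × EVec q) _)
      exact hc
    have hbase := indep_prod_aux (m := m) (hSmeas n) (hpairmeas n) hST
    have hc := hbase.comp
      (φ := fun r : (EVec q × EVec q) × (Fin n → EMat q × EVec q) => iterAff q n (r.1.1, r.2))
      (ψ := id)
      ((iterAff_measurable q n).comp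
        ((measurable_fst.comp measurable_fst).prodMk measurable_snd))
      measurable_id
    exact hc
  have hindepV : ∀ n : ℕ, IndepFun (Vf n)
      (fun p : Ω × (EVec q × EVec q) => (A (n + 1) p.1, B (n + 1) p.1)) P' := by
    intro n
    have hST : IndepFun (fun (ω : Ω) (k : Fin n) => (A (k + 1) ω, B (k + 1) ω))
        (fun ω => (A (n + 1) ω, B (n + 1) ω)) ℙ := by
      have hdisj : Disjoint (Finset.range n) ({n} : Finset ℕ) := by
        simp [Finset.disjoint_singleton_right]
      have h := (hiid.indepFun_finset (Finset.range n) {n} hdisj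
        (fun k => hpairmeas k))
      have hc := h.comp
        (φ := fun (v : ↥(Finset.range n) → EMat q × EVec q) (k : Fin n) =>
          v ⟨(k : ℕ), Finset.mem_range.2 k.isLt⟩)
        (ψ := fun (v : ↥({n} : Finset ℕ) → EMat q × EVec q) => v ⟨n, Finset.mem_singleton_self n⟩)
        (measurable_pi_lambda _ fun k => measurable_pi_apply _)
        (measurable_pi_apply (X := fun _ : ↥({n} : Finset ℕ) => EMat q × EVec q) _)
      exact hc
    have hbase := indep_prod_aux (m := m) (hSmeas n) (hpairmeas n) hST
    have hc := hbase.comp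
      (φ := fun r : (EVec q × EVec q) × (Fin n → EMat q × EVec q) => iterAff q n (r.1.2, r.2))
      (ψ := id)
      ((iterAff_measurable q n).comp
        ((measurable_snd.comp measurable_fst).prodMk measurable_snd))
      measurable_id
    exact hc
  -- the laws of the iterates
  have hlawU : ∀ n, Measure.map (Uf n) P' = μ := by
    intro n
    induction n with
    | zero =>
        have e : Uf 0 = Prod.fst ∘ Prod.snd := rfl
        rw [e, ← Measure.map_map measurable_fst measurable_snd, Measure.map_snd_prod,
          measure_univ, one_smul, Measure.map_fst_prod, measure_univ, one_smul]
    | succ n ih =>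
        rw [hrecU n]
        exact hμ (Ω × (EVec q × EVec q)) P' hP'prob (fun p => A (n + 1) p.1) (fun p => B (n + 1) p.1)
          (Uf n) ((hAmeas n).comp measurable_fst) ((hBmeas n).comp measurable_fst)
          (hUmeas n) (hident' n) (hindepU n) ih
  have hlawV : ∀ n, Measure.map (Vf n) P' = ν := by
    intro n
    induction n with
    | zero =>
        have e : Vf 0 = Prod.snd ∘ Prod.snd := rfl
        rw [e, ← Measure.map_map measurable_snd measurable_snd, Measure.map_snd_prod,
          measure_univ, one_smul, Measure.map_snd_prod, measure_univ, one_smul]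
    | succ n ih =>
        rw [hrecV n]
        exact hν (Ω × (EVec q × EVec q)) P' hP'prob (fun p => A (n + 1) p.1) (fun p => B (n + 1) p.1)
          (Vf n) ((hAmeas n).comp measurable_fst) ((hBmeas n).comp measurable_fst)
          (hVmeas n) (hident' n) (hindepV n) ih
  -- distance estimate
  have hdistbound : ∀ n p, dist (Uf n p) (Vf n p)
      ≤ (∏ i ∈ Finset.range n, ‖A (i + 1) p.1‖) * dist p.2.1 p.2.2 := by
    intro n
    induction n with
    | zero =>
        intro p
        show dist p.2.1 p.2.2 ≤ (∏ i ∈ Finset.range 0, ‖A (i + 1) p.1‖) * dist p.2.1 p.2.2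
        rw [Finset.prod_range_zero, one_mul]
    | succ n ih =>
        intro p
        have hstep : dist (Uf (n + 1) p) (Vf (n + 1) p)
            = dist (A (n + 1) p.1 (Uf n p)) (A (n + 1) p.1 (Vf n p)) := by
          rw [hrecU n, hrecV n]
          exact dist_add_right _ _ _
        have hle : dist (A (n + 1) p.1 (Uf n p)) (A (n + 1) p.1 (Vf n p))
            ≤ ‖A (n + 1) p.1‖ * dist (Uf n p) (Vf n p) := by
          rw [dist_eq_norm, dist_eq_norm, ← map_sub]
          exact (A (n + 1) p.1).le_opNorm _
        calc dist (Uf (n + 1) p) (Vf (n + 1) p)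
            ≤ ‖A (n + 1) p.1‖ * dist (Uf n p) (Vf n p) := by rw [hstep]; exact hle
          _ ≤ ‖A (n + 1) p.1‖ * ((∏ i ∈ Finset.range n, ‖A (i + 1) p.1‖) * dist p.2.1 p.2.2) :=
              mul_le_mul_of_nonneg_left (ih p) (norm_nonneg _)
          _ = (∏ i ∈ Finset.range (n + 1), ‖A (i + 1) p.1‖) * dist p.2.1 p.2.2 := by
              rw [Finset.prod_range_succ]; ring
  -- strong law of large numbers: products of norms tend to zero a.s.
  have gm : Measurable fun c : EMat q × EVec q => Real.log ‖c.1‖ :=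
    Real.measurable_log.comp measurable_fst.norm
  have hSLLN := strong_law_ae (μ := (ℙ : Measure Ω))
    (X := fun k ω => Real.log ‖A (k + 1) ω‖) hlogA_int
    (by
      intro i j hij
      exact (hiid.indepFun hij).comp gm gm)
    (by
      intro i
      exact ((hident i).trans (hident 0).symm).comp gm)
  have hprod : ∀ᵐ ω ∂(ℙ : Measure Ω),
      Tendsto (fun n => ∏ i ∈ Finset.range n, ‖A (i + 1) ω‖) atTop (𝓝 0) := by
    filter_upwards [hSLLN] with ω hω
    set L : ℝ := ∫ ω, Real.log ‖A (0 + 1) ω‖ ∂(ℙ : Measure Ω) with hLdef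
    have hLneg : L < 0 := hlogA_neg
    have hsum : Tendsto (fun n => ∑ i ∈ Finset.range n, Real.log ‖A (i + 1) ω‖)
        atTop atBot := by
      have h2 : Tendsto (fun n : ℕ => (n : ℝ) * (L / 2)) atTop atBot :=
        Tendsto.atTop_mul_const_of_neg (by linarith) tendsto_natCast_atTop_atTop
      refine tendsto_atBot_mono' atTop ?_ h2
      have hev : ∀ᶠ n : ℕ in atTop,
          (n : ℝ)⁻¹ • ∑ i ∈ Finset.range n, Real.log ‖A (i + 1) ω‖ < L / 2 :=
        hω.eventually_lt_const (by linarith)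
      filter_upwards [hev, eventually_ge_atTop 1] with n h1 h2
      have hn0 : (0 : ℝ) < (n : ℝ) := by exact_mod_cast h2
      have heq : ∑ i ∈ Finset.range n, Real.log ‖A (i + 1) ω‖
          = (n : ℝ) * ((n : ℝ)⁻¹ • ∑ i ∈ Finset.range n, Real.log ‖A (i + 1) ω‖) := by
        rw [smul_eq_mul, ← mul_assoc, mul_inv_cancel₀ hn0.ne', one_mul]
      rw [heq]
      exact mul_le_mul_of_nonneg_left h1.le hn0.le
    have hexp : Tendsto (fun n => Real.exp (∑ i ∈ Finset.range n, Real.log ‖A (i + 1) ω‖))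
        atTop (𝓝 0) := Real.tendsto_exp_atBot.comp hsum
    refine tendsto_of_tendsto_of_tendsto_of_le_of_le tendsto_const_nhds hexp
      (fun n => Finset.prod_nonneg fun i _ => norm_nonneg _) (fun n => ?_)
    calc ∏ i ∈ Finset.range n, ‖A (i + 1) ω‖
        ≤ ∏ i ∈ Finset.range n, Real.exp (Real.log ‖A (i + 1) ω‖) :=
          Finset.prod_le_prod (fun i _ => norm_nonneg _)
            (fun i _ => Real.le_exp_log _)
      _ = Real.exp (∑ i ∈ Finset.range n, Real.log ‖A (i + 1) ω‖) :=
          (Real.exp_sum _ _).symm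
  -- lift to the product space and get convergence of distances
  have hprod' : ∀ᵐ p ∂P',
      Tendsto (fun n => ∏ i ∈ Finset.range n, ‖A (i + 1) p.1‖) atTop (𝓝 0) :=
    Measure.quasiMeasurePreserving_fst.ae hprod
  have hdist0 : ∀ᵐ p ∂P', Tendsto (fun n => dist (Uf n p) (Vf n p)) atTop (𝓝 0) := by
    filter_upwards [hprod'] with p hp
    have hb : Tendsto (fun n => (∏ i ∈ Finset.range n, ‖A (i + 1) p.1‖) * dist p.2.1 p.2.2)
        atTop (𝓝 0) := by
      have := hp.mul_const (dist p.2.1 p.2.2)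
      rwa [zero_mul] at this
    exact tendsto_of_tendsto_of_tendsto_of_le_of_le tendsto_const_nhds hb
      (fun n => dist_nonneg) (fun n => hdistbound n p)
  -- conclude equality of the measures via closed sets
  have h1 : ∀ F : Set (EVec q), IsClosed F → μ F ≤ ν F := fun F hF =>
    closed_le_aux hUmeas hVmeas hlawU hlawV hdist0 hF
  have h2 : ∀ F : Set (EVec q), IsClosed F → ν F ≤ μ F := by
    intro F hF
    refine closed_le_aux hVmeas hUmeas hlawV hlawU ?_ hF
    filter_upwards [hdist0] with p hp
    simpa [dist_comm] using hp
  refine ext_of_generate_finite {s : Set (EVec q) | IsClosed s} ?_ isPiSystem_isClosed ?_ ?_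
  · rw [BorelSpace.measurable_eq (α := EVec q)]
    exact borel_eq_generateFrom_isClosed
  · exact fun s hs => le_antisymm (h1 s hs) (h2 s hs)
  · simp
end

section
/- Suppose Y_ϱ has the same distribution as Y₀. Then the chain (Y_k)_{k≥0} is strictly periodically stationary with period ϱ: for every n ≥ 1, all indices 0 ≤ k₁ < k₂ < ⋯ < k_n and every m ∈ ℕ, the random vector (Y_{k₁+mϱ}, Y_{k₂+mϱ}, …, Y_{k_n+mϱ}) has the same joint distribution as (Y_{k₁}, Y_{k₂}, …, Y_{k_n}). -/
open MeasureTheory ProbabilityTheory Filter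
open scoped NNReal Topology

section AuxAffine

variable {q : ℕ}

local notation "E" => EuclideanSpace ℝ (Fin q)

/-- Iterated affine recursion driven by a sequence of (matrix, vector) pairs. -/
noncomputable def affIter (q : ℕ) :
    ℕ → (ℕ → ((EuclideanSpace ℝ (Fin q) →L[ℝ] EuclideanSpace ℝ (Fin q))
      × EuclideanSpace ℝ (Fin q))) →
    EuclideanSpace ℝ (Fin q) → EuclideanSpace ℝ (Fin q)
  | 0, _, y => y
  | (t+1), ζ, y => (ζ t).1 (affIter q t ζ y) + (ζ t).2

lemma affIter_congr {t : ℕ}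
    {ζ ζ' : ℕ → ((E →L[ℝ] E) × E)} (h : ∀ s, s < t → ζ s = ζ' s) (y : E) :
    affIter q t ζ y = affIter q t ζ' y := by
  induction t with
  | zero => rfl
  | succ t ih =>
    have h' : ∀ s, s < t → ζ s = ζ' s := fun s hs => h s (Nat.lt_succ_of_lt hs)
    simp only [affIter, ih h', h t (Nat.lt_succ_self t)]

lemma affIter_measurable [MeasurableSpace (E →L[ℝ] E)] [BorelSpace (E →L[ℝ] E)] (t : ℕ) :
    Measurable (fun p : (ℕ → ((E →L[ℝ] E) × E)) × E => affIter q t p.1 p.2) := by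
  induction t with
  | zero => exact measurable_snd
  | succ t ih =>
    have happ : Measurable (fun p : (E →L[ℝ] E) × E => p.1 p.2) :=
      isBoundedBilinearMap_apply.continuous.measurable
    have h1 : Measurable (fun p : (ℕ → ((E →L[ℝ] E) × E)) × E =>
        (p.1 t).1 (affIter q t p.1 p.2)) :=
      happ.comp ((measurable_fst.comp ((measurable_pi_apply t).comp measurable_fst)).prodMk ih)
    exact h1.add (measurable_snd.comp ((measurable_pi_apply t).comp measurable_fst))

end AuxAffine

/-- Law of a finite tuple of independent random variables is the product of the laws. -/
lemma iIndepFun_map_pi {Ω : Type*} [MeasureSpace Ω] [IsProbabilityMeasure (ℙ : Measure Ω)]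
    {ι : Type*} [Fintype ι] {β : ι → Type*} [mβ : ∀ i, MeasurableSpace (β i)]
    {f : ∀ i, Ω → β i} (hmeas : ∀ i, Measurable (f i))
    (h : iIndepFun f ℙ) :
    (ℙ : Measure Ω).map (fun ω i => f i ω) = Measure.pi (fun i => (ℙ : Measure Ω).map (f i)) := by
  haveI : ∀ i, IsProbabilityMeasure ((ℙ : Measure Ω).map (f i)) :=
    fun i => Measure.isProbabilityMeasure_map (hmeas i).aemeasurable
  refine (Measure.pi_eq fun s hs => ?_).symm
  have htuple : Measurable (fun ω i => f i ω) := measurable_pi_lambda _ hmeas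
  rw [Measure.map_apply htuple (MeasurableSet.univ_pi hs)]
  have hpre : (fun ω i => f i ω) ⁻¹' (Set.univ.pi s) = ⋂ i, f i ⁻¹' s i := by
    ext ω; simp [Set.mem_pi]
  rw [hpre, h.meas_iInter (fun i => ⟨s i, hs i, rfl⟩)]
  exact Finset.prod_congr rfl fun i _ => (Measure.map_apply (hmeas i) (hs i)).symm

set_option maxHeartbeats 2000000 in
set_option synthInstance.maxHeartbeats 400000 in
/-- If the `ϱ`-blocks `C_j = ((A_{jϱ+1}, B_{jϱ+1}), …, (A_{(j+1)ϱ}, B_{(j+1)ϱ}))` are i.i.d.,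
`Y₀` is independent of the whole sequence, `Y_k = A_k Y_{k-1} + B_k`, and `Y_ϱ` has the same
distribution as `Y₀`, then the chain `(Y_k)` is strictly periodically stationary with period
`ϱ`: for any indices `k₁ < ⋯ < k_n` and any `m`, `(Y_{k₁+mϱ}, …, Y_{k_n+mϱ})` has the same
joint distribution as `(Y_{k₁}, …, Y_{k_n})`. -/
theorem affine_recurrence_periodically_stationary
    {Ω : Type*} [MeasureSpace Ω] [IsProbabilityMeasure (ℙ : Measure Ω)]
    {q : ℕ} (hq : 1 ≤ q) (ϱ : ℕ) (hϱ : 1 ≤ ϱ)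
    [MeasurableSpace (EuclideanSpace ℝ (Fin q) →L[ℝ] EuclideanSpace ℝ (Fin q))]
    [BorelSpace (EuclideanSpace ℝ (Fin q) →L[ℝ] EuclideanSpace ℝ (Fin q))]
    (A : ℕ → Ω → (EuclideanSpace ℝ (Fin q) →L[ℝ] EuclideanSpace ℝ (Fin q)))
    (B : ℕ → Ω → EuclideanSpace ℝ (Fin q))
    (hAmeas : ∀ k : ℕ, Measurable (A (k + 1)))
    (hBmeas : ∀ k : ℕ, Measurable (B (k + 1)))
    (hblock_iid : iIndepFun
      (fun (j : ℕ) ω (i : Fin ϱ) => (A (j * ϱ + i + 1) ω, B (j * ϱ + i + 1) ω)) ℙ)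
    (hblock_ident : ∀ j : ℕ,
      IdentDistrib (fun ω (i : Fin ϱ) => (A (j * ϱ + i + 1) ω, B (j * ϱ + i + 1) ω))
        (fun ω (i : Fin ϱ) => (A (i + 1) ω, B (i + 1) ω)) ℙ ℙ)
    (Y₀ : Ω → EuclideanSpace ℝ (Fin q)) (hY₀meas : Measurable Y₀)
    (hY₀indep : IndepFun Y₀ (fun ω (k : ℕ) => (A (k + 1) ω, B (k + 1) ω)) ℙ)
    (Y : ℕ → Ω → EuclideanSpace ℝ (Fin q)) (hY0 : Y 0 = Y₀)
    (hYrec : ∀ m : ℕ, Y (m + 1) = fun ω => A (m + 1) ω (Y m ω) + B (m + 1) ω)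
    (hstat : IdentDistrib (Y ϱ) (Y 0) ℙ ℙ) :
    ∀ (n : ℕ), 1 ≤ n → ∀ (k : Fin n → ℕ), StrictMono k → ∀ m : ℕ,
      IdentDistrib (fun ω (i : Fin n) => Y (k i + m * ϱ) ω)
        (fun ω (i : Fin n) => Y (k i) ω) ℙ ℙ := by
  classical
  have hϱpos : 0 < ϱ := hϱ
  -- the driving pairs
  set Z : ℕ → Ω → (((EuclideanSpace ℝ (Fin q)) →L[ℝ] (EuclideanSpace ℝ (Fin q))) × (EuclideanSpace ℝ (Fin q))) := fun t ω => (A (t + 1) ω, B (t + 1) ω) with hZ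
  have hZmeas : ∀ t, Measurable (Z t) := fun t => (hAmeas t).prodMk (hBmeas t)
  -- the blocks
  set W : ℕ → Ω → (Fin ϱ → (((EuclideanSpace ℝ (Fin q)) →L[ℝ] (EuclideanSpace ℝ (Fin q))) × (EuclideanSpace ℝ (Fin q)))) :=
    fun j ω i => (A (j * ϱ + i + 1) ω, B (j * ϱ + i + 1) ω) with hWdef
  have hWmeas : ∀ j, Measurable (W j) :=
    fun j => measurable_pi_lambda _ fun i => (hAmeas _).prodMk (hBmeas _)
  have hblock_iid' : iIndepFun W ℙ := hblock_iid
  -- measurability of Y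
  have hYmeas : ∀ t, Measurable (Y t) := by
    intro t
    induction t with
    | zero => rw [hY0]; exact hY₀meas
    | succ t ih =>
      rw [hYrec t]
      have happ : Measurable (fun p : ((EuclideanSpace ℝ (Fin q)) →L[ℝ] (EuclideanSpace ℝ (Fin q))) × (EuclideanSpace ℝ (Fin q)) => p.1 p.2) :=
        isBoundedBilinearMap_apply.continuous.measurable
      exact (happ.comp ((hAmeas t).prodMk ih)).add (hBmeas t)
  -- Y in terms of affIter
  have hFY : ∀ c t ω, Y (c + t) ω = affIter q t (fun s => Z (c + s) ω) (Y c ω) := by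
    intro c t ω
    induction t with
    | zero => rfl
    | succ t ih =>
      show Y ((c + t) + 1) ω = affIter q (t + 1) (fun s => Z (c + s) ω) (Y c ω)
      rw [hYrec (c + t)]
      show (A ((c + t) + 1) ω) (Y (c + t) ω) + B ((c + t) + 1) ω
        = affIter q (t + 1) (fun s => Z (c + s) ω) (Y c ω)
      rw [ih]
      rfl
  -- laws
  set ν : Measure (EuclideanSpace ℝ (Fin q)) := (ℙ : Measure Ω).map Y₀ with hν
  haveI : IsProbabilityMeasure ν := Measure.isProbabilityMeasure_map hY₀meas.aemeasurable
  set lam : Measure (Fin ϱ → (((EuclideanSpace ℝ (Fin q)) →L[ℝ] (EuclideanSpace ℝ (Fin q))) × (EuclideanSpace ℝ (Fin q)))) := (ℙ : Measure Ω).map (W 0) with hlam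
  haveI : IsProbabilityMeasure lam := Measure.isProbabilityMeasure_map (hWmeas 0).aemeasurable
  have hWlaw : ∀ j, (ℙ : Measure Ω).map (W j) = lam :=
    fun j => (hblock_ident j).map_eq.trans (hblock_ident 0).map_eq.symm
  have hYϱlaw : (ℙ : Measure Ω).map (Y ϱ) = ν := by
    rw [hν, ← hY0]; exact hstat.map_eq
  -- the key one-step shift lemma
  have key : ∀ (n : ℕ) (k : Fin n → ℕ),
      IdentDistrib (fun ω (i : Fin n) => Y (k i + ϱ) ω)
        (fun ω (i : Fin n) => Y (k i) ω) ℙ ℙ := by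
    intro n k
    set M : ℕ := (Finset.univ.sup k) + 1 with hM
    have hkM : ∀ i, k i ≤ M * ϱ := by
      intro i
      calc k i ≤ Finset.univ.sup k := Finset.le_sup (Finset.mem_univ i)
        _ ≤ M := Nat.le_succ _
        _ ≤ M * ϱ := Nat.le_mul_of_pos_right _ hϱpos
    haveI hP1 : ∀ i : Fin (M + 1), IsProbabilityMeasure ((fun _ : Fin (M + 1) => lam) i) :=
      fun _ => ‹IsProbabilityMeasure lam›
    haveI hP2 : ∀ i : Fin M, IsProbabilityMeasure ((fun _ : Fin M => lam) i) :=
      fun _ => ‹IsProbabilityMeasure lam›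
    haveI hS1 : ∀ i : Fin (M + 1), SigmaFinite ((fun _ : Fin (M + 1) => lam) i) :=
      fun _ => inferInstance
    haveI hS2 : ∀ i : Fin M, SigmaFinite ((fun _ : Fin M => lam) i) :=
      fun _ => inferInstance
    -- flatten a finite tuple of blocks into a sequence
    set flat : (Fin M → (Fin ϱ → (((EuclideanSpace ℝ (Fin q)) →L[ℝ] (EuclideanSpace ℝ (Fin q))) × (EuclideanSpace ℝ (Fin q))))) → ℕ → (((EuclideanSpace ℝ (Fin q)) →L[ℝ] (EuclideanSpace ℝ (Fin q))) × (EuclideanSpace ℝ (Fin q))) :=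
      fun w s => if h : s < M * ϱ then
          w ⟨s / ϱ, (Nat.div_lt_iff_lt_mul hϱpos).mpr h⟩ ⟨s % ϱ, Nat.mod_lt _ hϱpos⟩
        else (0, 0) with hflatdef
    have hflatmeas : Measurable flat := by
      apply measurable_pi_lambda
      intro s
      by_cases h : s < M * ϱ
      · simp only [hflatdef, h, dif_pos]
        exact (measurable_pi_apply _).comp (measurable_pi_apply _)
      · simp only [hflatdef, h, dif_neg, not_false_iff]
        exact measurable_const
    -- the output map
    set G : (EuclideanSpace ℝ (Fin q)) × (Fin M → (Fin ϱ → (((EuclideanSpace ℝ (Fin q)) →L[ℝ] (EuclideanSpace ℝ (Fin q))) × (EuclideanSpace ℝ (Fin q))))) → (Fin n → (EuclideanSpace ℝ (Fin q))) :=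
      fun p i => affIter q (k i) (flat p.2) p.1 with hGdef
    have hGmeas : Measurable G := by
      apply measurable_pi_lambda
      intro i
      exact (affIter_measurable (k i)).comp
        ((hflatmeas.comp measurable_snd).prodMk measurable_fst)
    -- block tuples
    set w0 : Ω → (Fin M → (Fin ϱ → (((EuclideanSpace ℝ (Fin q)) →L[ℝ] (EuclideanSpace ℝ (Fin q))) × (EuclideanSpace ℝ (Fin q))))) := fun ω j => W j ω with hw0
    set w1 : Ω → (Fin M → (Fin ϱ → (((EuclideanSpace ℝ (Fin q)) →L[ℝ] (EuclideanSpace ℝ (Fin q))) × (EuclideanSpace ℝ (Fin q))))) := fun ω j => W (j + 1) ω with hw1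
    have hw0meas : Measurable w0 := measurable_pi_lambda _ fun j => hWmeas _
    have hw1meas : Measurable w1 := measurable_pi_lambda _ fun j => hWmeas _
    -- pointwise identities
    have hflat0 : ∀ ω s, s < M * ϱ → flat (w0 ω) s = Z s ω := by
      intro ω s hs
      simp only [hflatdef, hs, dif_pos, hw0]
      show Z ((s / ϱ) * ϱ + s % ϱ) ω = Z s ω
      congr 1
      have h1 : ϱ * (s / ϱ) + s % ϱ = s := Nat.div_add_mod s ϱ
      rw [Nat.mul_comm] at h1
      omega
    have hflat1 : ∀ ω s, s < M * ϱ → flat (w1 ω) s = Z (ϱ + s) ω := by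
      intro ω s hs
      simp only [hflatdef, hs, dif_pos, hw1]
      show Z ((s / ϱ + 1) * ϱ + s % ϱ) ω = Z (ϱ + s) ω
      congr 1
      have h1 : ϱ * (s / ϱ) + s % ϱ = s := Nat.div_add_mod s ϱ
      rw [Nat.mul_comm] at h1
      have h2 : (s / ϱ + 1) * ϱ = s / ϱ * ϱ + ϱ := by ring
      omega
    have hG0 : (fun ω (i : Fin n) => Y (k i) ω) = fun ω => G (Y₀ ω, w0 ω) := by
      funext ω i
      have h1 : Y (k i) ω = affIter q (k i) (fun s => Z (0 + s) ω) (Y 0 ω) := by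
        have h2 := hFY 0 (k i) ω
        rwa [Nat.zero_add] at h2
      rw [h1, hY0]
      refine (affIter_congr (fun s hs => ?_) _)
      rw [Nat.zero_add, ← hflat0 ω s (lt_of_lt_of_le hs (hkM i))]
    have hG1 : (fun ω (i : Fin n) => Y (k i + ϱ) ω) = fun ω => G (Y ϱ ω, w1 ω) := by
      funext ω i
      have h1 : Y (k i + ϱ) ω = affIter q (k i) (fun s => Z (ϱ + s) ω) (Y ϱ ω) := by
        have h2 := hFY ϱ (k i) ω
        rwa [Nat.add_comm ϱ (k i)] at h2
      rw [h1]
      exact affIter_congr (fun s hs => (hflat1 ω s (lt_of_lt_of_le hs (hkM i))).symm) _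
    -- the (M+1)-tuple of blocks
    set Tup : Ω → (Fin (M + 1) → (Fin ϱ → (((EuclideanSpace ℝ (Fin q)) →L[ℝ] (EuclideanSpace ℝ (Fin q))) × (EuclideanSpace ℝ (Fin q))))) :=
      fun ω j => W (j : ℕ) ω with hTup
    have hTupMeas : Measurable Tup := measurable_pi_lambda _ fun j => hWmeas _
    -- Step A : the tuple of blocks is independent, with product law
    have hTupIndep : iIndepFun
        (fun (j : Fin (M + 1)) => W (j : ℕ)) ℙ := by
      rw [iIndepFun_iff]
      intro s f' H
      have hiid := (iIndepFun_iff _ _ _).mp hblock_iid'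
      set f'' : ℕ → Set Ω := fun t => if h : t < M + 1 then f' ⟨t, h⟩ else Set.univ with hf''
      have hval : ∀ i : Fin (M + 1), f'' (i : ℕ) = f' i := by
        intro i; simp only [hf'', i.isLt, dif_pos, Fin.eta]
      have hmeas'' : ∀ t ∈ s.image Fin.val,
          MeasurableSet[MeasurableSpace.comap (W t) inferInstance] (f'' t) := by
        intro t ht
        rw [Finset.mem_image] at ht
        obtain ⟨i, hi, rfl⟩ := ht
        rw [hval]
        exact H i hi
      have h1 := hiid (s.image Fin.val) hmeas''
      rw [Finset.prod_image (fun a _ b _ h => Fin.val_injective h)] at h1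
      have h2 : (⋂ t ∈ s.image Fin.val, f'' t) = ⋂ i ∈ s, f' i := by
        ext ω
        simp only [Set.mem_iInter, Finset.mem_image]
        constructor
        · intro h i hi
          have := h (i : ℕ) ⟨i, hi, rfl⟩
          rwa [hval] at this
        · rintro h t ⟨i, hi, rfl⟩
          rw [hval]; exact h i hi
      rw [h2] at h1
      rw [h1]
      exact Finset.prod_congr rfl fun i _ => by rw [hval]
    have hTupLaw : (ℙ : Measure Ω).map Tup
        = Measure.pi (fun _ : Fin (M + 1) => lam) := by
      have h1 : (ℙ : Measure Ω).map Tup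
          = Measure.pi (fun j : Fin (M + 1) => (ℙ : Measure Ω).map (W (j : ℕ))) :=
        iIndepFun_map_pi (fun j => hWmeas _) hTupIndep
      rw [h1]
      congr 1
      funext j
      exact hWlaw _
    -- Step B : independence of Y₀ and the block tuple
    have hYTindep : IndepFun Y₀ Tup ℙ := by
      have hφmeas : Measurable (fun z : ℕ → (((EuclideanSpace ℝ (Fin q)) →L[ℝ] (EuclideanSpace ℝ (Fin q))) × (EuclideanSpace ℝ (Fin q))) =>
          fun (j : Fin (M + 1)) (i : Fin ϱ) => z (j * ϱ + i)) :=
        measurable_pi_lambda _ fun j => measurable_pi_lambda _ fun i => measurable_pi_apply _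
      exact hY₀indep.comp measurable_id hφmeas
    have hPairLaw : (ℙ : Measure Ω).map (fun ω => (Y₀ ω, Tup ω))
        = ν.prod (Measure.pi (fun _ : Fin (M + 1) => lam)) := by
      rw [hν, ← hTupLaw]
      exact (indepFun_iff_map_prod_eq_prod_map_map hY₀meas.aemeasurable
        hTupMeas.aemeasurable).mp hYTindep
    -- the one-block map g with Y ϱ = g (Y₀, W 0)
    set g : (EuclideanSpace ℝ (Fin q)) × (Fin ϱ → (((EuclideanSpace ℝ (Fin q)) →L[ℝ] (EuclideanSpace ℝ (Fin q))) × (EuclideanSpace ℝ (Fin q)))) → (EuclideanSpace ℝ (Fin q)) :=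
      fun p => affIter q ϱ (fun s => if h : s < ϱ then p.2 ⟨s, h⟩ else (0, 0)) p.1 with hgdef
    have hgmeas : Measurable g := by
      have hin : Measurable (fun p : (EuclideanSpace ℝ (Fin q)) × (Fin ϱ → (((EuclideanSpace ℝ (Fin q)) →L[ℝ] (EuclideanSpace ℝ (Fin q))) × (EuclideanSpace ℝ (Fin q)))) =>
          (fun s => if h : s < ϱ then p.2 ⟨s, h⟩ else (0, 0)) ) := by
        apply measurable_pi_lambda
        intro s
        by_cases h : s < ϱ
        · simp only [h, dif_pos]
          exact (measurable_pi_apply _).comp measurable_snd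
        · simp only [h, dif_neg, not_false_iff]
          exact measurable_const
      exact (affIter_measurable ϱ).comp (hin.prodMk measurable_fst)
    have hgY : ∀ ω, Y ϱ ω = g (Y₀ ω, W 0 ω) := by
      intro ω
      have h1 : Y ϱ ω = affIter q ϱ (fun s => Z (0 + s) ω) (Y 0 ω) := by
        have h2 := hFY 0 ϱ ω
        rwa [Nat.zero_add] at h2
      rw [h1, hY0]
      simp only [hgdef]
      refine affIter_congr (fun s hs => ?_) _
      simp only [hs, dif_pos]
      show Z (0 + s) ω = Z (0 * ϱ + s) ω
      rw [Nat.zero_add, Nat.zero_mul, Nat.zero_add]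
    have hW0indep : IndepFun Y₀ (W 0) ℙ := by
      have hm : Measurable (fun z : ℕ → (((EuclideanSpace ℝ (Fin q)) →L[ℝ] (EuclideanSpace ℝ (Fin q))) × (EuclideanSpace ℝ (Fin q))) =>
          fun (i : Fin ϱ) => z (0 * ϱ + i)) :=
        measurable_pi_lambda _ fun i => measurable_pi_apply _
      exact hY₀indep.comp measurable_id hm
    have hYW0law : (ℙ : Measure Ω).map (fun ω => (Y₀ ω, W 0 ω)) = ν.prod lam := by
      rw [hν, hlam]
      exact (indepFun_iff_map_prod_eq_prod_map_map hY₀meas.aemeasurable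
        (hWmeas 0).aemeasurable).mp hW0indep
    have hgLaw : (ν.prod lam).map g = ν := by
      rw [← hYW0law, Measure.map_map hgmeas (hY₀meas.prodMk (hWmeas 0))]
      have h1 : (g ∘ fun ω => (Y₀ ω, W 0 ω)) = Y ϱ := funext fun ω => (hgY ω).symm
      rw [h1, hYϱlaw]
    -- splitting measures
    set piM : Measure (Fin M → (Fin ϱ → (((EuclideanSpace ℝ (Fin q)) →L[ℝ] (EuclideanSpace ℝ (Fin q))) × (EuclideanSpace ℝ (Fin q))))) :=
      Measure.pi (fun _ => lam) with hpiM
    haveI : IsProbabilityMeasure piM := by rw [hpiM]; infer_instance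
    set split0 : (Fin (M + 1) → (Fin ϱ → (((EuclideanSpace ℝ (Fin q)) →L[ℝ] (EuclideanSpace ℝ (Fin q))) × (EuclideanSpace ℝ (Fin q))))) →
        (Fin ϱ → (((EuclideanSpace ℝ (Fin q)) →L[ℝ] (EuclideanSpace ℝ (Fin q))) × (EuclideanSpace ℝ (Fin q)))) × (Fin M → (Fin ϱ → (((EuclideanSpace ℝ (Fin q)) →L[ℝ] (EuclideanSpace ℝ (Fin q))) × (EuclideanSpace ℝ (Fin q))))) :=
      fun w => (w 0, fun j : Fin M => w ((0 : Fin (M + 1)).succAbove j)) with hsplit0def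
    have hsplit0meas : Measurable split0 :=
      (measurable_pi_apply 0).prodMk
        (measurable_pi_lambda _ fun j => measurable_pi_apply _)
    have hsplit0 : (Measure.pi (fun _ : Fin (M + 1) => lam)).map split0 = lam.prod piM :=
      (measurePreserving_piFinSuccAbove (fun _ : Fin (M + 1) => lam) 0).map_eq
    set splitl : (Fin (M + 1) → (Fin ϱ → (((EuclideanSpace ℝ (Fin q)) →L[ℝ] (EuclideanSpace ℝ (Fin q))) × (EuclideanSpace ℝ (Fin q))))) →
        (Fin ϱ → (((EuclideanSpace ℝ (Fin q)) →L[ℝ] (EuclideanSpace ℝ (Fin q))) × (EuclideanSpace ℝ (Fin q)))) × (Fin M → (Fin ϱ → (((EuclideanSpace ℝ (Fin q)) →L[ℝ] (EuclideanSpace ℝ (Fin q))) × (EuclideanSpace ℝ (Fin q))))) :=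
      fun w => (w (Fin.last M), fun j : Fin M => w ((Fin.last M).succAbove j)) with hsplitldef
    have hsplitlmeas : Measurable splitl :=
      (measurable_pi_apply _).prodMk
        (measurable_pi_lambda _ fun j => measurable_pi_apply _)
    have hsplitl : (Measure.pi (fun _ : Fin (M + 1) => lam)).map splitl = lam.prod piM :=
      (measurePreserving_piFinSuccAbove (fun _ : Fin (M + 1) => lam) (Fin.last M)).map_eq
    -- law of (Y ϱ, w1)
    have hw1law : (ℙ : Measure Ω).map (fun ω => (Y ϱ ω, w1 ω)) = ν.prod piM := by
      have hΦmeas : Measurable (fun p : (EuclideanSpace ℝ (Fin q)) × (Fin (M + 1) → (Fin ϱ → (((EuclideanSpace ℝ (Fin q)) →L[ℝ] (EuclideanSpace ℝ (Fin q))) × (EuclideanSpace ℝ (Fin q))))) =>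
          (g (p.1, p.2 0), fun j : Fin M => p.2 j.succ)) :=
        (hgmeas.comp (measurable_fst.prodMk
          ((measurable_pi_apply 0).comp measurable_snd))).prodMk
          (measurable_pi_lambda _ fun j => (measurable_pi_apply j.succ).comp measurable_snd)
      have hΦ : (fun ω => (Y ϱ ω, w1 ω))
          = (fun p : (EuclideanSpace ℝ (Fin q)) × (Fin (M + 1) → (Fin ϱ → (((EuclideanSpace ℝ (Fin q)) →L[ℝ] (EuclideanSpace ℝ (Fin q))) × (EuclideanSpace ℝ (Fin q))))) =>
              (g (p.1, p.2 0), fun j : Fin M => p.2 j.succ)) ∘ (fun ω => (Y₀ ω, Tup ω)) := by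
        funext ω
        refine Prod.ext ?_ ?_
        · exact hgY ω
        · rfl
      rw [hΦ, ← Measure.map_map hΦmeas (hY₀meas.prodMk hTupMeas), hPairLaw]
      have hcomp : (fun p : (EuclideanSpace ℝ (Fin q)) × (Fin (M + 1) → (Fin ϱ → (((EuclideanSpace ℝ (Fin q)) →L[ℝ] (EuclideanSpace ℝ (Fin q))) × (EuclideanSpace ℝ (Fin q))))) =>
            (g (p.1, p.2 0), fun j : Fin M => p.2 j.succ))
          = ((Prod.map g id) ∘ (MeasurableEquiv.prodAssoc.symm)) ∘ (Prod.map id split0) := rfl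
      rw [hcomp]
      rw [← Measure.map_map ((hgmeas.prodMap measurable_id).comp
            (MeasurableEquiv.prodAssoc.symm.measurable)) (measurable_id.prodMap hsplit0meas)]
      have e1 : (ν.prod (Measure.pi (fun _ : Fin (M + 1) => lam))).map (Prod.map id split0)
          = ν.prod (lam.prod piM) := by
        rw [← Measure.map_prod_map _ _ measurable_id hsplit0meas, Measure.map_id, hsplit0]
      rw [e1]
      rw [← Measure.map_map (hgmeas.prodMap measurable_id)
            (MeasurableEquiv.prodAssoc.symm.measurable)]
      have e2 : (ν.prod (lam.prod piM)).map (MeasurableEquiv.prodAssoc.symm)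
          = (ν.prod lam).prod piM :=
        ((measurePreserving_prodAssoc ν lam piM).symm MeasurableEquiv.prodAssoc).map_eq
      rw [e2]
      rw [← Measure.map_prod_map _ _ hgmeas measurable_id, Measure.map_id, hgLaw]
    -- law of (Y₀, w0)
    have hw0law : (ℙ : Measure Ω).map (fun ω => (Y₀ ω, w0 ω)) = ν.prod piM := by
      have hdropmeas : Measurable (fun w : Fin (M + 1) → (Fin ϱ → (((EuclideanSpace ℝ (Fin q)) →L[ℝ] (EuclideanSpace ℝ (Fin q))) × (EuclideanSpace ℝ (Fin q)))) =>
          fun j : Fin M => w j.castSucc) :=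
        measurable_pi_lambda _ fun j => measurable_pi_apply _
      have hΨ : (fun ω => (Y₀ ω, w0 ω))
          = (Prod.map id (fun w : Fin (M + 1) → (Fin ϱ → (((EuclideanSpace ℝ (Fin q)) →L[ℝ] (EuclideanSpace ℝ (Fin q))) × (EuclideanSpace ℝ (Fin q)))) =>
              fun j : Fin M => w j.castSucc)) ∘ (fun ω => (Y₀ ω, Tup ω)) := rfl
      rw [hΨ, ← Measure.map_map (measurable_id.prodMap hdropmeas)
            (hY₀meas.prodMk hTupMeas), hPairLaw]
      have hdrop : (Measure.pi (fun _ : Fin (M + 1) => lam)).map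
          (fun w : Fin (M + 1) → (Fin ϱ → (((EuclideanSpace ℝ (Fin q)) →L[ℝ] (EuclideanSpace ℝ (Fin q))) × (EuclideanSpace ℝ (Fin q)))) =>
            fun j : Fin M => w j.castSucc) = piM := by
        have h1 : (fun w : Fin (M + 1) → (Fin ϱ → (((EuclideanSpace ℝ (Fin q)) →L[ℝ] (EuclideanSpace ℝ (Fin q))) × (EuclideanSpace ℝ (Fin q)))) =>
            fun j : Fin M => w j.castSucc) = Prod.snd ∘ splitl := by
          funext w
          simp only [Function.comp_apply, hsplitldef, Fin.succAbove_last]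
        rw [h1, ← Measure.map_map measurable_snd hsplitlmeas, hsplitl,
          Measure.map_snd_prod]
        simp
      rw [← Measure.map_prod_map _ _ measurable_id hdropmeas, Measure.map_id, hdrop]
    -- conclude
    have hId : IdentDistrib (fun ω => (Y ϱ ω, w1 ω)) (fun ω => (Y₀ ω, w0 ω)) ℙ ℙ := by
      refine ⟨((hYmeas ϱ).prodMk hw1meas).aemeasurable,
        (hY₀meas.prodMk hw0meas).aemeasurable, ?_⟩
      rw [hw1law, hw0law]
    have hfin := hId.comp hGmeas
    rw [hG0, hG1]
    exact hfin
  -- main induction on m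
  intro n hn k hk m
  induction m with
  | zero =>
    simp only [Nat.zero_mul, Nat.add_zero]
    exact IdentDistrib.refl (measurable_pi_lambda _ fun i => hYmeas (k i)).aemeasurable
  | succ m ih =>
    have h1 := key n (fun i => k i + m * ϱ)
    have h2 : (fun ω (i : Fin n) => Y (k i + (m + 1) * ϱ) ω)
        = (fun ω (i : Fin n) => Y ((k i + m * ϱ) + ϱ) ω) := by
      funext ω i
      rw [show k i + (m + 1) * ϱ = (k i + m * ϱ) + ϱ by ring]
    rw [h2]
    exact h1.trans ih
end

section
/- Let γ ≥ −α₀ be a real constant. Assume that aᵀ exp(tB) e ≥ 0 for all t ≥ 0, and that aᵀ exp(tB) y₀ ≥ γ for all t ≥ 0. Then for every n ≥ 0 and every t ≥ 0, aᵀ exp(tB) y_n ≥ γ; in particular the volatility values satisfy α₀ + aᵀ exp(tB) y_n ≥ α₀ + γ ≥ 0 for all n ≥ 0 and t ≥ 0. -/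
open Matrix

/-- Nonnegativity of the SS-COGARCH volatility (sufficiency direction of Theorem 3.3):
if `γ ≥ -α₀`, `aᵀ exp(tB) e ≥ 0` for all `t ≥ 0`, and `aᵀ exp(tB) y₀ ≥ γ` for all `t ≥ 0`,
then along the jump recursion
`y_{n+1} = exp(Δ_{n+1} B) y_n + (α₀ + aᵀ exp(Δ_{n+1} B) y_n) z_{n+1}² e`
one has `aᵀ exp(tB) y_n ≥ γ` for all `n` and `t ≥ 0`; in particular the volatility values
satisfy `α₀ + aᵀ exp(tB) y_n ≥ α₀ + γ ≥ 0`. -/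
theorem volatility_nonneg
    {q : ℕ} (hq : 1 ≤ q) (B : Matrix (Fin q) (Fin q) ℝ) (a e : Fin q → ℝ)
    (α₀ : ℝ) (hα₀ : 0 < α₀) (γ : ℝ) (hγ : -α₀ ≤ γ)
    (υ : ℕ → ℝ) (hυ0 : υ 0 = 0) (hυmono : StrictMono υ) (z : ℕ → ℝ)
    (y : ℕ → Fin q → ℝ)
    (hrec : ∀ n : ℕ, y (n + 1) =
      (NormedSpace.exp ((υ (n + 1) - υ n) • B)) *ᵥ (y n) +
        ((α₀ + a ⬝ᵥ ((NormedSpace.exp ((υ (n + 1) - υ n) • B)) *ᵥ (y n))) *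
          (z (n + 1)) ^ 2) • e)
    (h1 : ∀ t : ℝ, 0 ≤ t → 0 ≤ a ⬝ᵥ ((NormedSpace.exp (t • B)) *ᵥ e))
    (h2 : ∀ t : ℝ, 0 ≤ t → γ ≤ a ⬝ᵥ ((NormedSpace.exp (t • B)) *ᵥ (y 0))) :
    ∀ (n : ℕ) (t : ℝ), 0 ≤ t →
      γ ≤ a ⬝ᵥ ((NormedSpace.exp (t • B)) *ᵥ (y n)) ∧
        0 ≤ α₀ + γ ∧
        α₀ + γ ≤ α₀ + a ⬝ᵥ ((NormedSpace.exp (t • B)) *ᵥ (y n)) := by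
  have key : ∀ n : ℕ, ∀ t : ℝ, 0 ≤ t →
      γ ≤ a ⬝ᵥ ((NormedSpace.exp (t • B)) *ᵥ (y n)) := by
    intro n
    induction n with
    | zero => exact h2
    | succ n ih =>
      intro t ht
      set Δ := υ (n + 1) - υ n with hΔ
      have hΔpos : 0 < Δ := sub_pos.mpr (hυmono (Nat.lt_succ_self n))
      have hcomm : Commute (t • B) (Δ • B) := by
        apply Commute.smul_left
        apply Commute.smul_right
        exact Commute.refl B
      have hexp : NormedSpace.exp (t • B) * NormedSpace.exp (Δ • B)
          = NormedSpace.exp ((t + Δ) • B) := by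
        rw [← Matrix.exp_add_of_commute _ _ hcomm, ← add_smul]
      have hrec' := hrec n
      rw [hrec']
      rw [mulVec_add, dotProduct_add, mulVec_smul, dotProduct_smul,
        mulVec_mulVec, hexp]
      have h1' := h1 t ht
      have hc : 0 ≤ (α₀ + a ⬝ᵥ ((NormedSpace.exp (Δ • B)) *ᵥ (y n))) * (z (n + 1)) ^ 2 := by
        apply mul_nonneg _ (sq_nonneg _)
        have := ih Δ hΔpos.le
        linarith
      have := ih (t + Δ) (by linarith)
      have : γ ≤ a ⬝ᵥ ((NormedSpace.exp ((t + Δ) • B)) *ᵥ (y n)) := this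
      calc γ ≤ a ⬝ᵥ ((NormedSpace.exp ((t + Δ) • B)) *ᵥ (y n)) + 0 := by linarith
        _ ≤ _ := by
            apply add_le_add_right
            exact mul_nonneg hc h1'
  intro n t ht
  refine ⟨key n t ht, by linarith, by have := key n t ht; linarith⟩
end

section
/- Let c ≥ 1 be a real number. Assume E[‖A₁‖^c] < 1 and E[‖B₁‖^c] < ∞. Then the random series U := Σ_{k=0}^{∞} (A₁ A₂ ⋯ A_k) B_{k+1} converges absolutely almost surely and E[‖U‖^c] < ∞. -/
open MeasureTheory ProbabilityTheory Filter
open scoped NNReal Topology ENNReal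

/-- Expectation of a product of independent nonnegative random variables. -/
lemma aux_lintegral_prod_iIndepFun {Ω : Type*} [MeasurableSpace Ω] {μ : Measure Ω}
    [IsProbabilityMeasure μ] (f : ℕ → Ω → ℝ≥0∞) (hf : ∀ i, Measurable (f i))
    (hind : iIndepFun f μ) (s : Finset ℕ) :
    ∫⁻ ω, ∏ i ∈ s, f i ω ∂μ = ∏ i ∈ s, ∫⁻ ω, f i ω ∂μ := by
  classical
  induction s using Finset.cons_induction with
  | empty => simp
  | cons i s hi ih =>
    have hindep : IndepFun (f i) (fun ω => ∏ j ∈ s, f j ω) μ := by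
      have h := (hind.indepFun_finsetProd_of_notMem hf hi).symm
      rwa [Finset.prod_fn] at h
    have hmulti : Measurable fun ω => ∏ j ∈ s, f j ω :=
      Finset.measurable_prod s fun j _ => hf j
    calc ∫⁻ ω, ∏ j ∈ Finset.cons i s hi, f j ω ∂μ
        = ∫⁻ ω, f i ω * ∏ j ∈ s, f j ω ∂μ := by
          refine lintegral_congr fun ω => ?_
          rw [Finset.prod_cons]
      _ = (∫⁻ ω, f i ω ∂μ) * ∫⁻ ω, ∏ j ∈ s, f j ω ∂μ :=
          lintegral_mul_eq_lintegral_mul_lintegral_of_indepFun'' (hf i).aemeasurable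
            hmulti.aemeasurable hindep
      _ = ∏ j ∈ Finset.cons i s hi, ∫⁻ ω, f j ω ∂μ := by
          rw [Finset.prod_cons, ← ih]

/-- Minkowski's inequality for finite sums of nonnegative functions. -/
lemma aux_lintegral_Lp_sum_le {α : Type*} [MeasurableSpace α] {μ : Measure α}
    (f : ℕ → α → ℝ≥0∞) (hf : ∀ i, AEMeasurable (f i) μ) {c : ℝ} (hc : 1 ≤ c) (n : ℕ) :
    (∫⁻ a, (∑ i ∈ Finset.range n, f i a) ^ c ∂μ) ^ (1 / c) ≤
      ∑ i ∈ Finset.range n, (∫⁻ a, f i a ^ c ∂μ) ^ (1 / c) := by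
  have hc0 : (0 : ℝ) < c := lt_of_lt_of_le one_pos hc
  induction n with
  | zero =>
    have h0 : ((0 : ℝ≥0∞)) ^ c = 0 := ENNReal.zero_rpow_of_pos hc0
    have h0' : ((0 : ℝ≥0∞)) ^ (1 / c) = 0 := ENNReal.zero_rpow_of_pos (one_div_pos.mpr hc0)
    simp [h0, h0']
    exact hc0
  | succ n ih =>
    have hsum : AEMeasurable (fun a => ∑ i ∈ Finset.range n, f i a) μ :=
      Finset.aemeasurable_fun_sum _ fun i _ => hf i
    calc (∫⁻ a, (∑ i ∈ Finset.range (n + 1), f i a) ^ c ∂μ) ^ (1 / c)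
        = (∫⁻ a, ((∑ i ∈ Finset.range n, f i a) + f n a) ^ c ∂μ) ^ (1 / c) := by
          simp_rw [Finset.sum_range_succ]
      _ ≤ (∫⁻ a, (∑ i ∈ Finset.range n, f i a) ^ c ∂μ) ^ (1 / c)
            + (∫⁻ a, f n a ^ c ∂μ) ^ (1 / c) :=
          ENNReal.lintegral_Lp_add_le hsum (hf n) hc
      _ ≤ ∑ i ∈ Finset.range (n + 1), (∫⁻ a, f i a ^ c ∂μ) ^ (1 / c) := by
          rw [Finset.sum_range_succ]; exact add_le_add ih le_rfl

/-- Moments of the backward series (abstract form of Lemma 4.1): if `c ≥ 1`,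
`E[‖A₁‖^c] < 1` and `E[‖B₁‖^c] < ∞` for an i.i.d. sequence `((A_k, B_k))_{k≥1}`, then the
series `U = Σ_{k≥0} (A₁ ⋯ A_k) B_{k+1}` converges absolutely almost surely and
`E[‖U‖^c] < ∞`. -/
theorem backward_series_moments
    {Ω : Type*} [MeasureSpace Ω] [IsProbabilityMeasure (ℙ : Measure Ω)]
    {q : ℕ} (hq : 1 ≤ q)
    [MeasurableSpace (EuclideanSpace ℝ (Fin q) →L[ℝ] EuclideanSpace ℝ (Fin q))]
    [BorelSpace (EuclideanSpace ℝ (Fin q) →L[ℝ] EuclideanSpace ℝ (Fin q))]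
    (A : ℕ → Ω → (EuclideanSpace ℝ (Fin q) →L[ℝ] EuclideanSpace ℝ (Fin q)))
    (B : ℕ → Ω → EuclideanSpace ℝ (Fin q))
    (hAmeas : ∀ k : ℕ, Measurable (A (k + 1)))
    (hBmeas : ∀ k : ℕ, Measurable (B (k + 1)))
    (hiid : iIndepFun
      (fun (k : ℕ) ω => (A (k + 1) ω, B (k + 1) ω)) ℙ)
    (hident : ∀ k : ℕ, IdentDistrib (fun ω => (A (k + 1) ω, B (k + 1) ω))
      (fun ω => (A 1 ω, B 1 ω)) ℙ ℙ)
    (c : ℝ) (hc : 1 ≤ c)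
    (hAc_int : Integrable (fun ω => ‖A 1 ω‖ ^ c) ℙ)
    (hAc_lt : ∫ ω, ‖A 1 ω‖ ^ c ∂ℙ < 1)
    (hBc_int : Integrable (fun ω => ‖B 1 ω‖ ^ c) ℙ) :
    (∀ᵐ ω ∂ℙ, Summable (fun k : ℕ => ‖(fwdProd A 1 k ω) (B (k + 1) ω)‖)) ∧
      Integrable (fun ω => ‖∑' k : ℕ, (fwdProd A 1 k ω) (B (k + 1) ω)‖ ^ c) ℙ := by
  classical
  have hc0 : (0 : ℝ) < c := lt_of_lt_of_le one_pos hc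
  have hc0' : (0 : ℝ) ≤ c := hc0.le
  haveI : Nonempty (Fin q) := ⟨⟨0, hq⟩⟩
  haveI : Nontrivial (EuclideanSpace ℝ (Fin q)) := inferInstance
  -- measurability of the products
  have hrec : ∀ k ω, fwdProd A 1 (k + 1) ω = fwdProd A 1 k ω * A (1 + k) ω := by
    intro k ω
    simp [fwdProd, List.range_succ]
  have hfwd : ∀ k, Measurable (fwdProd A 1 k) := by
    intro k
    induction k with
    | zero =>
      have : fwdProd A 1 0 = fun _ => 1 := by funext ω; simp [fwdProd]
      rw [this]; exact measurable_const
    | succ k ih =>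
      have hA' : Measurable (A (1 + k)) := by
        have := hAmeas k; rwa [Nat.add_comm k 1] at this
      have : fwdProd A 1 (k + 1) = fun ω => fwdProd A 1 k ω * A (1 + k) ω :=
        funext fun ω => hrec k ω
      rw [this]; exact ih.mul hA'
  set F : ℕ → Ω → EuclideanSpace ℝ (Fin q) := fun k ω => (fwdProd A 1 k ω) (B (k + 1) ω) with hF
  have hFmeas : ∀ k, Measurable (F k) := by
    intro k
    have happ : Continuous fun p :
        (EuclideanSpace ℝ (Fin q) →L[ℝ] EuclideanSpace ℝ (Fin q)) × EuclideanSpace ℝ (Fin q) =>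
        p.1 p.2 := isBoundedBilinearMap_apply.continuous
    rw [hF]
    exact happ.measurable.comp ((hfwd k).prodMk (hBmeas k))
  set N : ℕ → Ω → ℝ≥0∞ := fun k ω => (‖F k ω‖₊ : ℝ≥0∞) with hN
  have hNmeas : ∀ k, Measurable (N k) := fun k => (hFmeas k).nnnorm.coe_nnreal_ennreal
  -- constants
  set rA : ℝ≥0∞ := ∫⁻ ω, (‖A 1 ω‖₊ : ℝ≥0∞) ^ c ∂ℙ with hrA
  set bB : ℝ≥0∞ := ∫⁻ ω, (‖B 1 ω‖₊ : ℝ≥0∞) ^ c ∂ℙ with hbB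
  have hA_eq : rA = ENNReal.ofReal (∫ ω, ‖A 1 ω‖ ^ c ∂ℙ) := by
    rw [hrA, MeasureTheory.ofReal_integral_eq_lintegral_ofReal hAc_int
      (Filter.Eventually.of_forall fun ω => Real.rpow_nonneg (norm_nonneg _) c)]
    refine lintegral_congr fun ω => ?_
    rw [← ENNReal.ofReal_rpow_of_nonneg (norm_nonneg _) hc0', ofReal_norm, enorm_eq_nnnorm]
  have hB_eq : bB = ENNReal.ofReal (∫ ω, ‖B 1 ω‖ ^ c ∂ℙ) := by
    rw [hbB, MeasureTheory.ofReal_integral_eq_lintegral_ofReal hBc_int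
      (Filter.Eventually.of_forall fun ω => Real.rpow_nonneg (norm_nonneg _) c)]
    refine lintegral_congr fun ω => ?_
    rw [← ENNReal.ofReal_rpow_of_nonneg (norm_nonneg _) hc0', ofReal_norm, enorm_eq_nnnorm]
  have hrA_lt : rA < 1 := by rw [hA_eq]; exact ENNReal.ofReal_lt_one.2 hAc_lt
  have hbB_lt : bB < ⊤ := by rw [hB_eq]; exact ENNReal.ofReal_lt_top
  -- identical distribution of the norms
  have hA_id : ∀ i : ℕ, ∫⁻ ω, (‖A (i + 1) ω‖₊ : ℝ≥0∞) ^ c ∂ℙ = rA := fun i =>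
    ((hident i).comp
      ((measurable_fst.nnnorm.coe_nnreal_ennreal).pow_const c)).lintegral_eq
  have hB_id : ∀ i : ℕ, ∫⁻ ω, (‖B (i + 1) ω‖₊ : ℝ≥0∞) ^ c ∂ℙ = bB := fun i =>
    ((hident i).comp
      ((measurable_snd.nnnorm.coe_nnreal_ennreal).pow_const c)).lintegral_eq
  have hnorm : ∀ (k : ℕ) ω, ‖fwdProd A 1 k ω‖₊ ≤ ∏ i ∈ Finset.range k, ‖A (i + 1) ω‖₊ := by
    intro k ω
    induction k with
    | zero => simp [fwdProd]
    | succ n ih =>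
      rw [hrec n ω, Finset.prod_range_succ]
      refine le_trans (nnnorm_mul_le _ _) ?_
      refine mul_le_mul' ih ?_
      rw [Nat.add_comm 1 n]
  -- the moment bound
  have hmom : ∀ k : ℕ, ∫⁻ ω, N k ω ^ c ∂ℙ ≤ rA ^ k * bB := by
    intro k
    set f : ℕ → Ω → ℝ≥0∞ := fun i ω =>
      if i < k then (‖A (i + 1) ω‖₊ : ℝ≥0∞) ^ c else (‖B (i + 1) ω‖₊ : ℝ≥0∞) ^ c with hf
    have hfmeas : ∀ i, Measurable (f i) := by
      intro i
      by_cases h : i < k <;> simp only [hf, h, if_true, if_false]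
      · exact ((hAmeas i).nnnorm.coe_nnreal_ennreal).pow_const c
      · exact ((hBmeas i).nnnorm.coe_nnreal_ennreal).pow_const c
    have hfind : iIndepFun f ℙ := by
      have := hiid.comp (mγ := fun _ => inferInstance) (g := fun i
        (p : (EuclideanSpace ℝ (Fin q) →L[ℝ] EuclideanSpace ℝ (Fin q)) × EuclideanSpace ℝ (Fin q)) =>
        if i < k then (‖p.1‖₊ : ℝ≥0∞) ^ c else (‖p.2‖₊ : ℝ≥0∞) ^ c) ?_
      · exact this
      · intro i
        by_cases h : i < k <;> simp only [h, if_true, if_false]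
        · exact (measurable_fst.nnnorm.coe_nnreal_ennreal).pow_const c
        · exact (measurable_snd.nnnorm.coe_nnreal_ennreal).pow_const c
    have hptwise : ∀ ω, N k ω ^ c ≤ ∏ i ∈ Finset.range (k + 1), f i ω := by
      intro ω
      have h1 : N k ω ≤ (∏ i ∈ Finset.range k, (‖A (i + 1) ω‖₊ : ℝ≥0∞)) *
          (‖B (k + 1) ω‖₊ : ℝ≥0∞) := by
        have h2 : ‖F k ω‖₊ ≤ ‖fwdProd A 1 k ω‖₊ * ‖B (k + 1) ω‖₊ :=
          ContinuousLinearMap.le_opNNNorm _ _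
        have h3 : (‖F k ω‖₊ : ℝ≥0∞) ≤ (‖fwdProd A 1 k ω‖₊ : ℝ≥0∞) * ‖B (k + 1) ω‖₊ := by
          exact_mod_cast h2
        refine h3.trans (mul_le_mul_left ?_ _)
        calc ((‖fwdProd A 1 k ω‖₊ : ℝ≥0∞))
            ≤ ((∏ i ∈ Finset.range k, ‖A (i + 1) ω‖₊ : ℝ≥0) : ℝ≥0∞) := by
              exact_mod_cast hnorm k ω
          _ = ∏ i ∈ Finset.range k, (‖A (i + 1) ω‖₊ : ℝ≥0∞) := by push_cast; rfl
      calc N k ω ^ c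
          ≤ ((∏ i ∈ Finset.range k, (‖A (i + 1) ω‖₊ : ℝ≥0∞)) *
              (‖B (k + 1) ω‖₊ : ℝ≥0∞)) ^ c := ENNReal.rpow_le_rpow h1 hc0'
        _ = (∏ i ∈ Finset.range k, (‖A (i + 1) ω‖₊ : ℝ≥0∞)) ^ c *
              (‖B (k + 1) ω‖₊ : ℝ≥0∞) ^ c := ENNReal.mul_rpow_of_nonneg _ _ hc0'
        _ = (∏ i ∈ Finset.range k, (‖A (i + 1) ω‖₊ : ℝ≥0∞) ^ c) *
              (‖B (k + 1) ω‖₊ : ℝ≥0∞) ^ c := by rw [ENNReal.prod_rpow_of_nonneg hc0']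
        _ = ∏ i ∈ Finset.range (k + 1), f i ω := by
            rw [Finset.prod_range_succ]
            congr 1
            · exact (Finset.prod_congr rfl fun i hi => by
                simp [hf, Finset.mem_range.mp hi]).symm
            · simp [hf]
    calc ∫⁻ ω, N k ω ^ c ∂ℙ
        ≤ ∫⁻ ω, ∏ i ∈ Finset.range (k + 1), f i ω ∂ℙ := lintegral_mono hptwise
      _ = ∏ i ∈ Finset.range (k + 1), ∫⁻ ω, f i ω ∂ℙ :=
          aux_lintegral_prod_iIndepFun f hfmeas hfind _
      _ = rA ^ k * bB := by
          rw [Finset.prod_range_succ]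
          congr 1
          · rw [Finset.prod_congr rfl (fun i hi => show ∫⁻ ω, f i ω ∂ℙ = rA from ?_),
              Finset.prod_const, Finset.card_range]
            have hik := Finset.mem_range.mp hi
            calc ∫⁻ ω, f i ω ∂ℙ = ∫⁻ ω, (‖A (i + 1) ω‖₊ : ℝ≥0∞) ^ c ∂ℙ :=
                  lintegral_congr fun ω => by simp [hf, hik]
              _ = rA := hA_id i
          · calc ∫⁻ ω, f k ω ∂ℙ = ∫⁻ ω, (‖B (k + 1) ω‖₊ : ℝ≥0∞) ^ c ∂ℙ :=
                lintegral_congr fun ω => by simp [hf]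
              _ = bB := hB_id k
  -- geometric bound for the Lᶜ norms
  set x : ℝ≥0∞ := rA ^ (1 / c) with hx
  set y : ℝ≥0∞ := bB ^ (1 / c) with hy
  have hx1 : x < 1 := ENNReal.rpow_lt_one hrA_lt (by positivity)
  have hyfin : y < ⊤ := ENNReal.rpow_lt_top_of_nonneg (by positivity) hbB_lt.ne
  have hLpk : ∀ k : ℕ, (∫⁻ ω, N k ω ^ c ∂ℙ) ^ (1 / c) ≤ x ^ k * y := by
    intro k
    calc (∫⁻ ω, N k ω ^ c ∂ℙ) ^ (1 / c)
        ≤ (rA ^ k * bB) ^ (1 / c) := ENNReal.rpow_le_rpow (hmom k) (by positivity)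
      _ = (rA ^ k) ^ (1 / c) * bB ^ (1 / c) := ENNReal.mul_rpow_of_nonneg _ _ (by positivity)
      _ = x ^ k * y := by
          rw [hx, hy, ← ENNReal.rpow_natCast rA k, ← ENNReal.rpow_mul,
            ← ENNReal.rpow_natCast (rA ^ (1 / c)) k, ← ENNReal.rpow_mul, mul_comm,
            mul_comm (k : ℝ) (1 / c)]
          exact mul_comm _ _
  set C : ℝ≥0∞ := (∑' k : ℕ, x ^ k) * y with hC
  have hCfin : C < ⊤ := by
    rw [hC, ENNReal.tsum_geometric]
    exact ENNReal.mul_lt_top (ENNReal.inv_lt_top.2 (tsub_pos_of_lt hx1)) hyfin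
  have hpartial : ∀ n : ℕ, ∫⁻ ω, (∑ k ∈ Finset.range n, N k ω) ^ c ∂ℙ ≤ C ^ c := by
    intro n
    have h1 : (∫⁻ ω, (∑ k ∈ Finset.range n, N k ω) ^ c ∂ℙ) ^ (1 / c) ≤ C := by
      refine le_trans (aux_lintegral_Lp_sum_le N (fun k => (hNmeas k).aemeasurable) hc n) ?_
      calc ∑ k ∈ Finset.range n, (∫⁻ ω, N k ω ^ c ∂ℙ) ^ (1 / c)
          ≤ ∑ k ∈ Finset.range n, x ^ k * y := Finset.sum_le_sum fun k _ => hLpk k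
        _ = (∑ k ∈ Finset.range n, x ^ k) * y := by rw [Finset.sum_mul]
        _ ≤ C := mul_le_mul_left (ENNReal.sum_le_tsum _) _
    have h2 := ENNReal.rpow_le_rpow h1 hc0'
    rwa [← ENNReal.rpow_mul, one_div_mul_cancel hc0.ne', ENNReal.rpow_one] at h2
  -- the tail sum
  set G : Ω → ℝ≥0∞ := fun ω => ∑' k : ℕ, N k ω with hG
  have hGmeas : Measurable G := Measurable.ennreal_tsum hNmeas
  have hGtendsto : ∀ ω, Tendsto (fun n => (∑ k ∈ Finset.range n, N k ω) ^ c) atTop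
      (𝓝 (G ω ^ c)) := fun ω =>
    (ENNReal.continuous_rpow_const.continuousAt.tendsto).comp
      (ENNReal.tendsto_nat_tsum fun k => N k ω)
  have hGint : ∫⁻ ω, G ω ^ c ∂ℙ ≤ C ^ c := by
    calc ∫⁻ ω, G ω ^ c ∂ℙ
        = ∫⁻ ω, liminf (fun n => (∑ k ∈ Finset.range n, N k ω) ^ c) atTop ∂ℙ :=
          lintegral_congr fun ω => ((hGtendsto ω).liminf_eq).symm
      _ ≤ liminf (fun n => ∫⁻ ω, (∑ k ∈ Finset.range n, N k ω) ^ c ∂ℙ) atTop :=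
          lintegral_liminf_le fun n =>
            (Finset.measurable_sum _ fun k _ => hNmeas k).pow_const c
      _ ≤ C ^ c := liminf_le_of_frequently_le' (Frequently.of_forall hpartial)
  have hGint' : ∫⁻ ω, G ω ^ c ∂ℙ < ⊤ :=
    lt_of_le_of_lt hGint (ENNReal.rpow_lt_top_of_nonneg hc0' hCfin.ne)
  -- almost sure finiteness of G
  have hGfin : ∀ᵐ ω ∂ℙ, G ω < ⊤ := by
    have h := ae_lt_top (hGmeas.pow_const c) hGint'.ne
    filter_upwards [h] with ω hω
    by_contra hcon
    push_neg at hcon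
    rw [top_le_iff.mp hcon, ENNReal.top_rpow_of_pos hc0] at hω
    exact absurd hω (lt_irrefl _)
  have hsummable : ∀ᵐ ω ∂ℙ, Summable fun k : ℕ => ‖F k ω‖ := by
    filter_upwards [hGfin] with ω hω
    have h1 : Summable fun k => ‖F k ω‖₊ := ENNReal.tsum_coe_ne_top_iff_summable.mp hω.ne
    have h2 : Summable fun k => ((‖F k ω‖₊ : ℝ≥0) : ℝ) := NNReal.summable_coe.2 h1
    simpa [coe_nnnorm] using h2
  refine ⟨hsummable, ?_⟩
  -- measurability of the sum
  have hUmeas : AEStronglyMeasurable (fun ω => ∑' k : ℕ, F k ω) ℙ := by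
    refine aestronglyMeasurable_of_tendsto_ae (f := fun n ω => ∑ k ∈ Finset.range n, F k ω)
      atTop (fun n =>
        (Finset.measurable_sum _ fun k _ => hFmeas k).aestronglyMeasurable) ?_
    filter_upwards [hsummable] with ω hω
    exact (Summable.of_norm hω).hasSum.tendsto_sum_nat
  -- domination
  have hUbound : ∀ᵐ ω ∂ℙ, (‖∑' k : ℕ, F k ω‖₊ : ℝ≥0∞) ≤ G ω := by
    filter_upwards [hsummable] with ω hω
    have h1 : Summable fun k => ‖F k ω‖₊ := by
      rw [← NNReal.summable_coe]
      simpa [coe_nnnorm] using hω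
    calc (‖∑' k : ℕ, F k ω‖₊ : ℝ≥0∞)
        ≤ ((∑' k : ℕ, ‖F k ω‖₊ : ℝ≥0) : ℝ≥0∞) := ENNReal.coe_le_coe.2 (nnnorm_tsum_le h1)
      _ = ∑' k : ℕ, (‖F k ω‖₊ : ℝ≥0∞) := ENNReal.coe_tsum h1
  constructor
  · exact (hUmeas.norm.aemeasurable.pow_const c).aestronglyMeasurable
  · rw [hasFiniteIntegral_iff_norm]
    calc ∫⁻ ω, ENNReal.ofReal ‖‖∑' k : ℕ, F k ω‖ ^ c‖ ∂ℙ
        ≤ ∫⁻ ω, G ω ^ c ∂ℙ := by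
          refine lintegral_mono_ae ?_
          filter_upwards [hUbound] with ω hω
          have h1 : ENNReal.ofReal ‖‖∑' k : ℕ, F k ω‖ ^ c‖ =
              (‖∑' k : ℕ, F k ω‖₊ : ℝ≥0∞) ^ c := by
            rw [Real.norm_of_nonneg (Real.rpow_nonneg (norm_nonneg _) c),
              ← enorm_eq_nnnorm, ← ofReal_norm,
              ← ENNReal.ofReal_rpow_of_nonneg (norm_nonneg _) hc0']
          rw [h1]
          exact ENNReal.rpow_le_rpow hω hc0'
      _ < ⊤ := hGint'
end
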